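/- Let Ω ⊆ ℝⁿ be open, F⁰,…,F^d : Ω → ℝⁿ and S⁰,…,S^d : Ω → ℝ smooth, and suppose ψ : Ω → ℝⁿ is a smooth diffeomorphism onto its image satisfying ψ(U)ᵀ D_U F^α(U) = D_U S^α(U) for all U ∈ Ω and each α. Define X^α(ψ) = ψᵀ F^α(U(ψ)) - S^α(U(ψ)) in the ψ-coordinates. Then ∂X^α/∂ψ_i = F^α_i for each i and α; in particular D²_ψ X^α = D_ψ F^α is symmetric. -/

import Mathlib

noncomputable section

/-- The Godunov potential construction: if the main field `ψ` (a smooth diffeomorphism with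
smooth inverse `U`) satisfies `ψᵀ D_U F^α = D_U S^α` on `Ω`, then the potential
`X^α(ψ) = ψᵀ F^α(U(ψ)) - S^α(U(ψ))` satisfies `∂X^α/∂ψ_i = F^α_i`; in particular
`D²_ψ X^α = D_ψ F^α` is symmetric. -/
theorem stmt13 (n d : ℕ) (Ω : Set (Fin n → ℝ)) (hΩ : IsOpen Ω)
    (F : Fin (d + 1) → (Fin n → ℝ) → (Fin n → ℝ))
    (S : Fin (d + 1) → (Fin n → ℝ) → ℝ)
    (ψ U : (Fin n → ℝ) → (Fin n → ℝ))
    (hF : ∀ α, ContDiffOn ℝ (⊤ : ℕ∞) (F α) Ω)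
    (hS : ∀ α, ContDiffOn ℝ (⊤ : ℕ∞) (S α) Ω)
    (hψ : ContDiffOn ℝ (⊤ : ℕ∞) ψ Ω)
    (hopen : IsOpen (ψ '' Ω))
    (hU : ContDiffOn ℝ (⊤ : ℕ∞) U (ψ '' Ω))
    (hinv : ∀ x ∈ Ω, U (ψ x) = x)
    (hinv' : ∀ q ∈ ψ '' Ω, ψ (U q) = q)
    -- the compatibility relation ψᵀ D_U F^α = D_U S^α on Ω
    (hmain : ∀ α, ∀ x ∈ Ω, ∀ j : Fin n,
      ∑ i, ψ x i * fderiv ℝ (fun y => F α y i) x (Pi.single j 1)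
        = fderiv ℝ (S α) x (Pi.single j 1)) :
    ∀ α, ∀ q ∈ ψ '' Ω,
      (∀ i : Fin n,
        fderiv ℝ (fun r => (∑ k, r k * F α (U r) k) - S α (U r)) q (Pi.single i 1)
          = F α (U q) i) ∧
      (∀ i j : Fin n,
        fderiv ℝ (fun r => F α (U r) j) q (Pi.single i 1)
          = fderiv ℝ (fun r => F α (U r) i) q (Pi.single j 1)) := by
  intro α
  set G : (Fin n → ℝ) → ℝ := fun r => (∑ k, r k * F α (U r) k) - S α (U r) with hGdef
  have hmaps : Set.MapsTo U (ψ '' Ω) Ω := by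
    rintro q ⟨x, hx, rfl⟩
    rw [hinv x hx]; exact hx
  -- Part 1: the gradient of the potential is F ∘ U
  have key1 : ∀ q ∈ ψ '' Ω, ∀ i : Fin n,
      fderiv ℝ G q (Pi.single i 1) = F α (U q) i := by
    rintro q ⟨x, hx, rfl⟩ i
    have hqm : ψ x ∈ ψ '' Ω := ⟨x, hx, rfl⟩
    have hUq : U (ψ x) = x := hinv x hx
    have hUd : DifferentiableAt ℝ U (ψ x) :=
      (hU.contDiffAt (hopen.mem_nhds hqm)).differentiableAt (by simp)
    set LU := fderiv ℝ U (ψ x) with hLUdef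
    have hLUd : HasFDerivAt U LU (ψ x) := hUd.hasFDerivAt
    have hFd : DifferentiableAt ℝ (F α) x :=
      ((hF α).contDiffAt (hΩ.mem_nhds hx)).differentiableAt (by simp)
    set LF := fderiv ℝ (F α) x with hLFdef
    have hSd : DifferentiableAt ℝ (S α) x :=
      ((hS α).contDiffAt (hΩ.mem_nhds hx)).differentiableAt (by simp)
    set LS := fderiv ℝ (S α) x with hLSdef
    -- componentwise derivatives of F
    have hcomp : ∀ k j : Fin n,
        fderiv ℝ (fun y => F α y k) x (Pi.single j 1) = LF (Pi.single j 1) k := by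
      intro k j
      have h1 : HasFDerivAt (fun y => F α y k)
          ((ContinuousLinearMap.proj k).comp LF) x :=
        (ContinuousLinearMap.proj k : (Fin n → ℝ) →L[ℝ] ℝ).hasFDerivAt.comp x
          hFd.hasFDerivAt
      rw [h1.fderiv]; rfl
    have hmain' : ∀ j : Fin n,
        ∑ k, ψ x k * LF (Pi.single j 1) k = LS (Pi.single j 1) := by
      intro j
      have h := hmain α x hx j
      simp only [hcomp] at h
      exact h
    -- linearity extension of the compatibility relation
    have key : ∀ w : Fin n → ℝ, ∑ k, ψ x k * LF w k = LS w := by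
      intro w
      have hsingle : ∀ j : Fin n, (Pi.single j (w j) : Fin n → ℝ)
          = w j • (Pi.single j 1 : Fin n → ℝ) := by
        intro j
        funext m
        by_cases h : m = j <;> simp [Pi.single_apply, h]
      have hwF : ∀ k, LF w k = ∑ j, w j * LF (Pi.single j 1) k := by
        intro k
        conv_lhs => rw [← Finset.univ_sum_single w, map_sum]
        simp [hsingle]
      have hwS : LS w = ∑ j, w j * LS (Pi.single j 1) := by
        conv_lhs => rw [← Finset.univ_sum_single w, map_sum]
        simp [hsingle]
      simp only [hwF, hwS, Finset.mul_sum]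
      rw [Finset.sum_comm]
      refine Finset.sum_congr rfl fun j _ => ?_
      rw [← hmain' j, Finset.mul_sum]
      exact Finset.sum_congr rfl fun k _ => by ring
    -- derivative of the potential
    have hFU : HasFDerivAt (fun r => F α (U r)) (LF.comp LU) (ψ x) := by
      have h : HasFDerivAt (F α) LF (U (ψ x)) := by rw [hUq]; exact hFd.hasFDerivAt
      exact h.comp (ψ x) hLUd
    have hSU : HasFDerivAt (fun r => S α (U r)) (LS.comp LU) (ψ x) := by
      have h : HasFDerivAt (S α) LS (U (ψ x)) := by rw [hUq]; exact hSd.hasFDerivAt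
      exact h.comp (ψ x) hLUd
    have hterm : ∀ k : Fin n, HasFDerivAt (fun r => r k * F α (U r) k)
        ((ψ x k) • ((ContinuousLinearMap.proj k).comp (LF.comp LU))
          + (F α x k) • (ContinuousLinearMap.proj k : (Fin n → ℝ) →L[ℝ] ℝ)) (ψ x) := by
      intro k
      have h1 : HasFDerivAt (fun r : Fin n → ℝ => r k)
          (ContinuousLinearMap.proj k : (Fin n → ℝ) →L[ℝ] ℝ) (ψ x) :=
        (ContinuousLinearMap.proj k : (Fin n → ℝ) →L[ℝ] ℝ).hasFDerivAt
      have h2 : HasFDerivAt (fun r => F α (U r) k)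
          ((ContinuousLinearMap.proj k).comp (LF.comp LU)) (ψ x) :=
        (ContinuousLinearMap.proj k : (Fin n → ℝ) →L[ℝ] ℝ).hasFDerivAt.comp (ψ x) hFU
      have h := h1.mul h2
      rw [hUq] at h
      exact h
    have hGder : HasFDerivAt G
        ((∑ k, ((ψ x k) • ((ContinuousLinearMap.proj k).comp (LF.comp LU))
          + (F α x k) • (ContinuousLinearMap.proj k : (Fin n → ℝ) →L[ℝ] ℝ)))
          - LS.comp LU) (ψ x) :=
      (HasFDerivAt.fun_sum (fun k _ => hterm k)).sub hSU
    rw [hGder.fderiv]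
    simp only [ContinuousLinearMap.sub_apply, ContinuousLinearMap.coe_sum',
      Finset.sum_apply, ContinuousLinearMap.add_apply, ContinuousLinearMap.smul_apply,
      ContinuousLinearMap.coe_comp', Function.comp_apply, ContinuousLinearMap.proj_apply,
      smul_eq_mul]
    rw [Finset.sum_add_distrib, key (LU (Pi.single i 1)), add_sub_cancel_left, hUq]
    simp [Pi.single_apply]
  intro q hq
  constructor
  · intro i; exact key1 q hq i
  · -- Part 2: symmetry of the second derivative
    intro i j
    have hFUc : ContDiffOn ℝ (⊤ : ℕ∞) (fun r => F α (U r)) (ψ '' Ω) :=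
      (hF α).comp hU hmaps
    have hGc : ContDiffOn ℝ (⊤ : ℕ∞) G (ψ '' Ω) := by
      refine ContDiffOn.sub (ContDiffOn.sum fun k _ => ContDiffOn.mul ?_ ?_)
        ((hS α).comp hU hmaps)
      · exact (ContinuousLinearMap.proj k :
          (Fin n → ℝ) →L[ℝ] ℝ).contDiff.contDiffOn
      · exact (ContinuousLinearMap.proj k :
          (Fin n → ℝ) →L[ℝ] ℝ).contDiff.comp_contDiffOn hFUc
    have hqn : ψ '' Ω ∈ nhds q := hopen.mem_nhds hq
    have hGa : ContDiffAt ℝ (⊤ : ℕ∞) G q := hGc.contDiffAt hqn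
    have hdf : DifferentiableAt ℝ (fderiv ℝ G) q :=
      (hGa.fderiv_right (m := (⊤ : ℕ∞)) (by norm_num)).differentiableAt (by simp)
    have hev : ∀ m : Fin n, (fun r => F α (U r) m)
        =ᶠ[nhds q] (fun r => fderiv ℝ G r (Pi.single m 1)) := by
      intro m
      filter_upwards [hqn] with r hr
      exact (key1 r hr m).symm
    have hsnd : ∀ m : Fin n, fderiv ℝ (fun r => fderiv ℝ G r (Pi.single m 1)) q
        = (ContinuousLinearMap.apply ℝ ℝ (Pi.single m 1 : Fin n → ℝ)).comp
            (fderiv ℝ (fderiv ℝ G) q) := by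
      intro m
      have h := ((ContinuousLinearMap.apply ℝ ℝ
        (Pi.single m 1 : Fin n → ℝ)).hasFDerivAt.comp q hdf.hasFDerivAt).fderiv
      exact h
    have hsym : IsSymmSndFDerivAt ℝ G q := hGa.isSymmSndFDerivAt (by simp [minSmoothness_of_isRCLikeNormedField]; exact (WithTop.coe_le_coe.2 (le_top : (2 : ℕ∞) ≤ ⊤) : ((2 : ℕ∞) : WithTop ℕ∞) ≤ ((⊤ : ℕ∞) : WithTop ℕ∞)))
    calc fderiv ℝ (fun r => F α (U r) j) q (Pi.single i 1)
        = fderiv ℝ (fun r => fderiv ℝ G r (Pi.single j 1)) q (Pi.single i 1) := by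
          rw [(hev j).fderiv_eq]
      _ = fderiv ℝ (fderiv ℝ G) q (Pi.single i 1) (Pi.single j 1) := by
          rw [hsnd j]; rfl
      _ = fderiv ℝ (fderiv ℝ G) q (Pi.single j 1) (Pi.single i 1) := hsym _ _
      _ = fderiv ℝ (fun r => fderiv ℝ G r (Pi.single i 1)) q (Pi.single j 1) := by
          rw [hsnd i]; rfl
      _ = fderiv ℝ (fun r => F α (U r) i) q (Pi.single j 1) := by
          rw [(hev i).fderiv_eq]
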